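/- Let G = (V,E) be a graph, v ∈ V with N3(v) ≠ ∅, and let G' be the graph obtained from G by removing the vertices N2(v) ∪ N3(v) and adding a new vertex v' adjacent only to v. Then the domination numbers satisfy γ(G) = γ(G'). -/

import Mathlib

open Set

variable {V : Type*}

/-- Closed neighborhood N[v]. -/
def closedNbr (G : SimpleGraph V) (v : V) : Set V := insert v (G.neighborSet v)

/-- N1(v) = {u ∈ N(v) : N(u) \ N[v] ≠ ∅}. -/
def N1 (G : SimpleGraph V) (v : V) : Set V :=
  {u | u ∈ G.neighborSet v ∧ (G.neighborSet u \ closedNbr G v).Nonempty}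

/-- N2(v) = {u ∈ N(v) \ N1(v) : N(u) ∩ N1(v) ≠ ∅}. -/
def N2 (G : SimpleGraph V) (v : V) : Set V :=
  {u | u ∈ G.neighborSet v \ N1 G v ∧ (G.neighborSet u ∩ N1 G v).Nonempty}

/-- N3(v) = N(v) \ (N1(v) ∪ N2(v)). -/
def N3 (G : SimpleGraph V) (v : V) : Set V :=
  G.neighborSet v \ (N1 G v ∪ N2 G v)

/-- D is a dominating set: every vertex outside D has a neighbor in D. -/
def IsDomSet (G : SimpleGraph V) (D : Set V) : Prop :=
  ∀ u, u ∉ D → ∃ d ∈ D, G.Adj u d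

/-- The domination number γ(G). -/
noncomputable def domNum (G : SimpleGraph V) : ℕ :=
  sInf {n | ∃ D : Set V, IsDomSet G D ∧ D.ncard = n}

/-- The graph obtained from `G` by applying Rule 1 at `v`: the vertices of
`N2(v) ∪ N3(v)` are removed, and a fresh vertex (represented by `none`)
is added, adjacent only to `v`. -/
def ruleOneGraph (G : SimpleGraph V) (v : V) :
    SimpleGraph (Option {x : V // x ∉ N2 G v ∪ N3 G v}) where
  Adj a b :=
    match a, b with
    | some x, some y => G.Adj x.val y.val
    | some x, none => x.val = v
    | none, some y => y.val = v
    | none, none => False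
  symm := by
    constructor
    intro a b h
    cases a <;> cases b <;> simp_all
    exact h.symm
  loopless := by
    constructor
    intro a
    cases a <;> simp


lemma domNum_le_ncard {V : Type*} {G : SimpleGraph V} {D : Set V} (hD : IsDomSet G D) :
    domNum G ≤ D.ncard :=
  Nat.sInf_le ⟨D, hD, rfl⟩

lemma exists_min_dom {V : Type*} (G : SimpleGraph V) :
    ∃ D : Set V, IsDomSet G D ∧ D.ncard = domNum G := by
  have hne : {n | ∃ D : Set V, IsDomSet G D ∧ D.ncard = n}.Nonempty :=
    ⟨(Set.univ : Set V).ncard, Set.univ, fun u hu => absurd (Set.mem_univ u) hu, rfl⟩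
  obtain ⟨D, hD, hc⟩ := Nat.sInf_mem hne
  exact ⟨D, hD, hc⟩

lemma nbr_subset_closed {V : Type*} {G : SimpleGraph V} {v u : V}
    (hu : u ∈ N2 G v ∪ N3 G v) : G.neighborSet u ⊆ closedNbr G v := by
  have h1 : u ∉ N1 G v := by
    rcases hu with h | h
    · exact h.1.2
    · exact fun hn => h.2 (Or.inl hn)
  have h2 : u ∈ G.neighborSet v := by
    rcases hu with h | h
    · exact h.1.1
    · exact h.1
  intro w hw
  by_contra hc
  exact h1 ⟨h2, ⟨w, hw, hc⟩⟩

lemma S_subset_nbr {V : Type*} {G : SimpleGraph V} {v : V} :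
    N2 G v ∪ N3 G v ⊆ G.neighborSet v := by
  rintro u (h | h)
  · exact h.1.1
  · exact h.1

lemma v_notin_S {V : Type*} {G : SimpleGraph V} {v : V} : v ∉ N2 G v ∪ N3 G v :=
  fun hc => G.loopless.irrefl v (S_subset_nbr hc)

theorem stmt_4 [Fintype V] (G : SimpleGraph V) (v : V) (h : (N3 G v).Nonempty) :
    domNum G = domNum (ruleOneGraph G v) := by
  classical
  set S := N2 G v ∪ N3 G v with hS
  apply le_antisymm
  · -- direction γ(G) ≤ γ(G')
    obtain ⟨D', hD', hcard⟩ := exists_min_dom (ruleOneGraph G v)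
    set f : Option {x : V // x ∉ S} → V := fun a => a.elim v Subtype.val with hf
    set D : Set V := f '' D' with hD
    have hvD : v ∈ D := by
      by_cases hn : none ∈ D'
      · exact ⟨none, hn, rfl⟩
      · obtain ⟨d, hd, hadj⟩ := hD' none hn
        match d with
        | some y => exact ⟨some y, hd, hadj⟩
        | none => exact absurd hadj (by simp [ruleOneGraph])
    have hdom : IsDomSet G D := by
      intro u hu
      by_cases hcv : u ∈ closedNbr G v
      · rcases hcv with rfl | hnv
        · exact absurd hvD hu
        · exact ⟨v, hvD, G.adj_symm hnv⟩
      · have huS : u ∉ S := fun hc => hcv (Or.inr (S_subset_nbr hc))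
        have hu' : some ⟨u, huS⟩ ∉ D' := fun hc => hu ⟨_, hc, rfl⟩
        obtain ⟨d, hd, hadj⟩ := hD' (some ⟨u, huS⟩) hu'
        match d with
        | some y => exact ⟨y.val, ⟨some y, hd, rfl⟩, hadj⟩
        | none =>
          exact absurd (Or.inl hadj.symm : u ∈ closedNbr G v) hcv
    calc domNum G ≤ D.ncard := domNum_le_ncard hdom
      _ ≤ D'.ncard := Set.ncard_image_le (Set.toFinite D')
      _ = domNum (ruleOneGraph G v) := hcard
  · -- direction γ(G') ≤ γ(G)
    obtain ⟨D, hDdom, hcard⟩ := exists_min_dom G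
    set D₁ : Set V := insert v (D \ S) with hD₁
    have hw : ∃ w ∈ D, w = v ∨ w ∈ S := by
      obtain ⟨u0, hu0⟩ := h
      by_cases hu0D : u0 ∈ D
      · exact ⟨u0, hu0D, Or.inr (Or.inr hu0)⟩
      · obtain ⟨d, hd, hadj⟩ := hDdom u0 hu0D
        have hdN : d ∈ closedNbr G v := nbr_subset_closed (Or.inr hu0) hadj
        rcases hdN with rfl | hdNv
        · exact ⟨d, hd, Or.inl rfl⟩
        · have hdN1 : d ∉ N1 G v := by
            intro hc
            exact hu0.2 (Or.inr ⟨⟨hu0.1, fun h1 => hu0.2 (Or.inl h1)⟩, ⟨d, hadj, hc⟩⟩)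
          by_cases hdN2 : d ∈ N2 G v
          · exact ⟨d, hd, Or.inr (Or.inl hdN2)⟩
          · exact ⟨d, hd, Or.inr (Or.inr ⟨hdNv, fun hc =>
              hc.elim hdN1 hdN2⟩)⟩
    have hcard1 : D₁.ncard ≤ D.ncard := by
      obtain ⟨w, hwD, hwS⟩ := hw
      rcases hwS with rfl | hwS
      · apply Set.ncard_le_ncard _ (Set.toFinite D)
        intro x hx
        rcases hx with rfl | hx
        · exact hwD
        · exact hx.1
      · by_cases hvD : v ∈ D
        · apply Set.ncard_le_ncard _ (Set.toFinite D)
          intro x hx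
          rcases hx with rfl | hx
          · exact hvD
          · exact hx.1
        · have hvd : v ∉ D \ S := fun hc => hvD hc.1
          rw [hD₁, Set.ncard_insert_of_notMem hvd (Set.toFinite _)]
          have hsub : D \ S ⊆ D \ {w} := fun x hx =>
            ⟨hx.1, fun hc => hx.2 (by rwa [Set.mem_singleton_iff.mp hc])⟩
          have h1 : (D \ S).ncard ≤ (D \ {w}).ncard :=
            Set.ncard_le_ncard hsub (Set.toFinite _)
          have h2 : (D \ {w}).ncard + 1 = D.ncard :=
            Set.ncard_diff_singleton_add_one hwD (Set.toFinite D)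
          omega
    have hD₁S : ∀ x ∈ D₁, x ∉ S := by
      rintro x (rfl | hx)
      · exact v_notin_S
      · exact hx.2
    have hdom1 : IsDomSet G D₁ := by
      intro u hu
      by_cases hcv : u ∈ closedNbr G v
      · rcases hcv with rfl | hnv
        · exact absurd (Or.inl rfl) hu
        · exact ⟨v, Or.inl rfl, G.adj_symm hnv⟩
      · have huS : u ∉ S := fun hc => hcv (Or.inr (S_subset_nbr hc))
        have huD : u ∉ D := fun hc => hu (Or.inr ⟨hc, huS⟩)
        obtain ⟨d, hd, hadj⟩ := hDdom u huD
        have hdS : d ∉ S := fun hc => hcv (nbr_subset_closed hc hadj.symm)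
        exact ⟨d, Or.inr ⟨hd, hdS⟩, hadj⟩
    set g : V → Option {x : V // x ∉ S} :=
      fun x => if hx : x ∉ S then some ⟨x, hx⟩ else none with hg
    set D' := g '' D₁ with hD'
    have hvS : v ∉ S := v_notin_S
    have hgv : g v = some ⟨v, hvS⟩ := by simp [hg, hvS]
    have hdom' : IsDomSet (ruleOneGraph G v) D' := by
      intro a ha
      match a with
      | none =>
        refine ⟨some ⟨v, hvS⟩, ⟨v, Or.inl rfl, hgv⟩, rfl⟩
      | some x =>
        have hx : x.val ∉ D₁ := by
          intro hc
          exact ha ⟨x.val, hc, by simp [hg, show x.val ∉ S from x.prop]⟩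
        obtain ⟨d, hd, hadj⟩ := hdom1 x.val hx
        have hdS : d ∉ S := hD₁S d hd
        exact ⟨some ⟨d, hdS⟩, ⟨d, hd, by simp [hg, hdS]⟩, hadj⟩
    calc domNum (ruleOneGraph G v) ≤ D'.ncard := domNum_le_ncard hdom'
      _ ≤ D₁.ncard := Set.ncard_image_le (Set.toFinite D₁)
      _ ≤ D.ncard := hcard1
      _ = domNum G := hcard
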